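/- For any partition λ of n, the transition probabilities c_i(λ) = H_λ / H_{λ^{(i)}} (taken to be 0 when λ^{(i)} is not a partition) satisfy ∑_{i=1}^{ℓ(λ)+1} c_i(λ) = 1, i.e. the transition measure ω_λ is a probability measure. -/

import Mathlib

open Finset

/-- Conjugate part `λ'_j` (number of rows of length `≥ j`), rows indexed in `range L`. -/
def conjPart (L : ℕ) (lam : ℕ → ℕ) (j : ℕ) : ℕ :=
  ((Finset.range L).filter (fun i => j ≤ lam i)).card

/-- Product of hook lengths `H_λ = ∏_{(i,j)∈λ} (λ_i + λ'_j - i - j + 1)`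
(rows 0-indexed, so the hook of the cell in row `i`, column `j` is
`λ_i + λ'_j - i - j` with our conventions), as a rational number. -/
def hookProd (L : ℕ) (lam : ℕ → ℕ) : ℚ :=
  ∏ i ∈ Finset.range L, ∏ j ∈ Finset.Icc 1 (lam i),
    ((lam i : ℚ) + (conjPart L lam j : ℚ) - (i : ℚ) - (j : ℚ))

open scoped Classical in
/-- Transition probability `cᵢ(λ) = H_λ / H_{λ^{(i)}}`, equal to `0` when adding a
box to row `i` does not produce a partition. -/
noncomputable def transProb (L : ℕ) (lam : ℕ → ℕ) (i : ℕ) : ℚ :=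
  if Antitone (Function.update lam i (lam i + 1)) then
    hookProd L lam / hookProd L (Function.update lam i (lam i + 1))
  else 0

section Aux
variable (l : ℕ) (lam : ℕ → ℕ)

/-- beta-set coordinate `a_i = λ_i + (l - i)`. -/
def bcoord (i : ℕ) : ℕ := lam i + (l - i)

variable {l lam}

lemma conj_le (j : ℕ) : conjPart (l+1) lam j ≤ l + 1 := by
  classical
  calc ((Finset.range (l+1)).filter (fun i => j ≤ lam i)).card
      ≤ (Finset.range (l+1)).card := Finset.card_filter_le _ _
    _ = l + 1 := Finset.card_range _

lemma conj_anti {j j' : ℕ} (h : j ≤ j') : conjPart (l+1) lam j' ≤ conjPart (l+1) lam j := by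
  classical
  refine Finset.card_le_card (fun r hr => ?_)
  rw [Finset.mem_filter] at hr ⊢
  exact ⟨hr.1, le_trans h hr.2⟩

lemma conj_ge (hanti : Antitone lam) {i j : ℕ} (hi : i ≤ l) (hj : j ≤ lam i) :
    i + 1 ≤ conjPart (l+1) lam j := by
  classical
  have : Finset.range (i+1) ⊆ (Finset.range (l+1)).filter (fun r => j ≤ lam r) := by
    intro r hr
    rw [Finset.mem_range] at hr
    refine Finset.mem_filter.mpr ⟨Finset.mem_range.mpr (by omega), ?_⟩
    exact le_trans hj (hanti (by omega))
  have hc := Finset.card_le_card this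
  rw [Finset.card_range] at hc
  simpa [conjPart] using hc

lemma conj_le_of_lt (hanti : Antitone lam) {k j : ℕ} (hkj : lam k < j) :
    conjPart (l+1) lam j ≤ k := by
  classical
  have : (Finset.range (l+1)).filter (fun r => j ≤ lam r) ⊆ Finset.range k := by
    intro r hr
    rw [Finset.mem_filter] at hr
    rw [Finset.mem_range]
    by_contra hrk
    push_neg at hrk
    exact absurd (le_trans hr.2 (hanti hrk)) (by omega)
  simpa [conjPart] using (Finset.card_range k ▸ Finset.card_le_card this)

lemma bcoord_strict_anti (hanti : Antitone lam) {k k' : ℕ} (h : k < k') (hk' : k' ≤ l) :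
    bcoord l lam k' < bcoord l lam k := by
  have := hanti h.le
  unfold bcoord; omega

/-- The key combinatorial fact: hook lengths in row `i` together with the
differences `a_i - a_k` (k > i) are exactly `{1, ..., a_i}`. -/
lemma row_sets (hanti : Antitone lam) {i : ℕ} (hi : i ≤ l) :
    ((Finset.Icc 1 (lam i)).image (fun j => lam i + conjPart (l+1) lam j - i - j)) ∪
      ((Finset.Icc (i+1) l).image (fun k => bcoord l lam i - bcoord l lam k))
      = Finset.Icc 1 (bcoord l lam i) ∧
    Disjoint ((Finset.Icc 1 (lam i)).image (fun j => lam i + conjPart (l+1) lam j - i - j))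
      ((Finset.Icc (i+1) l).image (fun k => bcoord l lam i - bcoord l lam k)) ∧
    Set.InjOn (fun j => lam i + conjPart (l+1) lam j - i - j) (Finset.Icc 1 (lam i)) ∧
    Set.InjOn (fun k => bcoord l lam i - bcoord l lam k) (Finset.Icc (i+1) l) := by
  classical
  have c' : ℕ → ℕ := conjPart (l+1) lam
  have hφinj : Set.InjOn (fun j => lam i + conjPart (l+1) lam j - i - j) (Finset.Icc 1 (lam i)) := by
    intro j hj j' hj' hee
    simp only [Finset.coe_Icc, Set.mem_Icc] at hj hj'
    have h1 := conj_ge hanti hi hj.2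
    have h1' := conj_ge hanti hi hj'.2
    rcases le_total j j' with h | h
    · have := conj_anti (lam := lam) (l := l) h
      simp only at hee; omega
    · have := conj_anti (lam := lam) (l := l) h
      simp only at hee; omega
  have hψinj : Set.InjOn (fun k => bcoord l lam i - bcoord l lam k) (Finset.Icc (i+1) l) := by
    intro k hk k' hk' hee
    simp only [Finset.coe_Icc, Set.mem_Icc] at hk hk'
    rcases lt_trichotomy k k' with h | h | h
    · have h2 := bcoord_strict_anti hanti h hk'.2
      have h3 := bcoord_strict_anti hanti (show i < k by omega) hk.2
      have h4 := bcoord_strict_anti hanti (show i < k' by omega) hk'.2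
      simp only at hee; omega
    · exact h
    · have h2 := bcoord_strict_anti hanti h hk.2
      have h3 := bcoord_strict_anti hanti (show i < k by omega) hk.2
      have h4 := bcoord_strict_anti hanti (show i < k' by omega) hk'.2
      simp only at hee; omega
  have hdisj : Disjoint ((Finset.Icc 1 (lam i)).image (fun j => lam i + conjPart (l+1) lam j - i - j))
      ((Finset.Icc (i+1) l).image (fun k => bcoord l lam i - bcoord l lam k)) := by
    rw [Finset.disjoint_left]
    rintro x hx hx'
    rw [Finset.mem_image] at hx hx'
    obtain ⟨j, hj, rfl⟩ := hx
    obtain ⟨k, hk, he⟩ := hx'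
    rw [Finset.mem_Icc] at hj hk
    have h1 := conj_ge hanti hi hj.2
    have hlk := hanti (show i ≤ k by omega)
    have hdich : (j ≤ lam k → k + 1 ≤ conjPart (l+1) lam j) ∧ (lam k < j → conjPart (l+1) lam j ≤ k) := by
      constructor
      · intro hjk; exact conj_ge hanti hk.2 hjk
      · intro hjk; exact conj_le_of_lt hanti hjk
    unfold bcoord at he
    omega
  refine ⟨?_, hdisj, hφinj, hψinj⟩
  have hsub : ((Finset.Icc 1 (lam i)).image (fun j => lam i + conjPart (l+1) lam j - i - j)) ∪
      ((Finset.Icc (i+1) l).image (fun k => bcoord l lam i - bcoord l lam k))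
      ⊆ Finset.Icc 1 (bcoord l lam i) := by
    intro x hx
    rw [Finset.mem_union, Finset.mem_image, Finset.mem_image] at hx
    rw [Finset.mem_Icc]
    rcases hx with ⟨j, hj, rfl⟩ | ⟨k, hk, rfl⟩
    · rw [Finset.mem_Icc] at hj
      have h1 := conj_ge hanti hi hj.2
      have h2 := conj_le (lam := lam) (l := l) j
      unfold bcoord; omega
    · rw [Finset.mem_Icc] at hk
      have h2 := bcoord_strict_anti hanti (show i < k by omega) hk.2
      omega
  refine Finset.eq_of_subset_of_card_le hsub ?_
  rw [Finset.card_union_of_disjoint hdisj, Finset.card_image_of_injOn hφinj,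
    Finset.card_image_of_injOn hψinj, Nat.card_Icc, Nat.card_Icc, Nat.card_Icc]
  unfold bcoord; omega

end Aux

section Aux2
variable {l : ℕ} {lam : ℕ → ℕ}

lemma row_prod (hanti : Antitone lam) {i : ℕ} (hi : i ≤ l) :
    (∏ j ∈ Finset.Icc 1 (lam i),
        ((lam i : ℚ) + (conjPart (l+1) lam j : ℚ) - (i : ℚ) - (j : ℚ))) *
      (∏ k ∈ Finset.Icc (i+1) l, ((bcoord l lam i : ℚ) - (bcoord l lam k : ℚ)))
      = (Nat.factorial (bcoord l lam i) : ℚ) := by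
  classical
  obtain ⟨huni, hdisj, hφ, hψ⟩ := row_sets hanti hi
  have e1 : (∏ j ∈ Finset.Icc 1 (lam i),
      ((lam i : ℚ) + (conjPart (l+1) lam j : ℚ) - (i : ℚ) - (j : ℚ)))
      = ∏ j ∈ Finset.Icc 1 (lam i), ((lam i + conjPart (l+1) lam j - i - j : ℕ) : ℚ) := by
    refine Finset.prod_congr rfl fun j hj => ?_
    rw [Finset.mem_Icc] at hj
    have h1 := conj_ge hanti hi hj.2
    rw [Nat.cast_sub (by omega), Nat.cast_sub (by omega), Nat.cast_add]
  have e2 : (∏ k ∈ Finset.Icc (i+1) l, ((bcoord l lam i : ℚ) - (bcoord l lam k : ℚ)))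
      = ∏ k ∈ Finset.Icc (i+1) l, ((bcoord l lam i - bcoord l lam k : ℕ) : ℚ) := by
    refine Finset.prod_congr rfl fun k hk => ?_
    rw [Finset.mem_Icc] at hk
    have := bcoord_strict_anti hanti (show i < k by omega) hk.2
    rw [Nat.cast_sub (by omega)]
  have p1 : ∏ x ∈ (Finset.Icc 1 (lam i)).image
        (fun j => lam i + conjPart (l+1) lam j - i - j), (x : ℚ)
      = ∏ j ∈ Finset.Icc 1 (lam i), ((lam i + conjPart (l+1) lam j - i - j : ℕ) : ℚ) :=
    Finset.prod_image (fun x hx y hy h => hφ hx hy h)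
  have p2 : ∏ x ∈ (Finset.Icc (i+1) l).image
        (fun k => bcoord l lam i - bcoord l lam k), (x : ℚ)
      = ∏ k ∈ Finset.Icc (i+1) l, ((bcoord l lam i - bcoord l lam k : ℕ) : ℚ) :=
    Finset.prod_image (fun x hx y hy h => hψ hx hy h)
  rw [e1, e2, ← p1, ← p2, ← Finset.prod_union hdisj, huni]
  rw [← Nat.cast_prod, ← Finset.Ico_add_one_right_eq_Icc, show (∏ x ∈ Finset.Ico 1 (bcoord l lam i + 1), x) = _ from
    Finset.prod_Ico_id_eq_factorial _]

lemma hook_formula (hanti : Antitone lam) :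
    hookProd (l+1) lam *
      (∏ m ∈ Finset.range (l+1), ∏ k ∈ Finset.Icc (m+1) l,
        ((bcoord l lam m : ℚ) - (bcoord l lam k : ℚ)))
      = ∏ m ∈ Finset.range (l+1), (Nat.factorial (bcoord l lam m) : ℚ) := by
  rw [hookProd, ← Finset.prod_mul_distrib]
  exact Finset.prod_congr rfl fun m hm => row_prod hanti (by
    have := Finset.mem_range.mp hm; omega)

end Aux2

noncomputable section Main
open Polynomial

/-- Closed form of the transition probability in terms of beta-set coordinates. -/
def transT (l : ℕ) (lam : ℕ → ℕ) (i : ℕ) : ℚ :=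
  (∏ k ∈ (Finset.range (l+1)).erase i, ((bcoord l lam i : ℚ) + 1 - (bcoord l lam k : ℚ))) *
    (((bcoord l lam i : ℚ) + 1) *
      ∏ k ∈ (Finset.range (l+1)).erase i, ((bcoord l lam i : ℚ) - (bcoord l lam k : ℚ)))⁻¹

variable {l : ℕ} {lam : ℕ → ℕ}

lemma update_antitone (hanti : Antitone lam) {i : ℕ} (h : i = 0 ∨ lam i < lam (i-1)) :
    Antitone (Function.update lam i (lam i + 1)) := by
  intro a b hab
  simp only [Function.update_apply]
  split_ifs with hb ha ha
  · exact le_refl _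
  · have h2 := hanti (show a ≤ i - 1 by omega)
    rcases h with h | h
    · omega
    · omega
  · have h2 := hanti (show i ≤ b by omega)
    omega
  · exact hanti hab

lemma bcoord_ne (hanti : Antitone lam) {a b : ℕ} (hab : a ≠ b) (ha : a ≤ l) (hb : b ≤ l) :
    (bcoord l lam a : ℚ) ≠ (bcoord l lam b : ℚ) := by
  rcases lt_or_gt_of_ne hab with h | h
  · exact_mod_cast Nat.ne_of_gt (bcoord_strict_anti hanti h hb)
  · exact_mod_cast Nat.ne_of_lt (bcoord_strict_anti hanti h ha)

lemma D_ne_zero (hanti : Antitone lam) :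
    (∏ m ∈ Finset.range (l+1), ∏ k ∈ Finset.Icc (m+1) l,
      ((bcoord l lam m : ℚ) - (bcoord l lam k : ℚ))) ≠ 0 := by
  rw [Finset.prod_ne_zero_iff]
  intro m hm
  rw [Finset.prod_ne_zero_iff]
  intro k hk
  rw [Finset.mem_range] at hm
  rw [Finset.mem_Icc] at hk
  exact sub_ne_zero_of_ne (bcoord_ne hanti (by omega) (by omega) hk.2)

lemma ratio_eq (hanti : Antitone lam) {i : ℕ} (hi : i ≤ l)
    (hanti' : Antitone (Function.update lam i (lam i + 1))) :
    hookProd (l+1) lam / hookProd (l+1) (Function.update lam i (lam i + 1))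
      = transT l lam i := by
  classical
  set lam' := Function.update lam i (lam i + 1) with hlam'
  have hA' : ∀ k, bcoord l lam' k = if k = i then bcoord l lam i + 1 else bcoord l lam k := by
    intro k
    unfold bcoord
    rcases eq_or_ne k i with h | hk
    · rw [if_pos h, h, hlam', Function.update_self]
      omega
    · rw [if_neg hk, hlam', Function.update_of_ne hk]
  set A : ℕ → ℚ := fun k => (bcoord l lam k : ℚ) with hA
  have hA'c : ∀ k, (bcoord l lam' k : ℚ) = if k = i then A k + 1 else A k := by
    intro k
    rw [hA']
    split_ifs with h
    · subst h
      simp only [hA]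
      push_cast
      ring
    · rw [hA]
  -- notation
  set D : ℚ := ∏ m ∈ Finset.range (l+1), ∏ k ∈ Finset.Icc (m+1) l, (A m - A k) with hD
  set D' : ℚ := ∏ m ∈ Finset.range (l+1), ∏ k ∈ Finset.Icc (m+1) l,
      ((bcoord l lam' m : ℚ) - (bcoord l lam' k : ℚ)) with hD'
  set F : ℚ := ∏ m ∈ Finset.range (l+1), (Nat.factorial (bcoord l lam m) : ℚ) with hF
  set F' : ℚ := ∏ m ∈ Finset.range (l+1), (Nat.factorial (bcoord l lam' m) : ℚ) with hF'
  set E : ℚ := ∏ k ∈ (Finset.range (l+1)).erase i, (A i - A k) with hE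
  set E' : ℚ := ∏ k ∈ (Finset.range (l+1)).erase i, (A i + 1 - A k) with hE'
  have hmemi : i ∈ Finset.range (l+1) := Finset.mem_range.mpr (by omega)
  have hHD : hookProd (l+1) lam * D = F := hook_formula hanti
  have hHD' : hookProd (l+1) lam' * D' = F' := hook_formula hanti'
  have hDne : D ≠ 0 := D_ne_zero hanti
  have hD'ne : D' ≠ 0 := D_ne_zero hanti'
  have hFne : F ≠ 0 := by
    rw [hF, Finset.prod_ne_zero_iff]
    intro m _
    exact_mod_cast Nat.factorial_ne_zero _
  have hEne : E ≠ 0 := by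
    rw [hE, Finset.prod_ne_zero_iff]
    intro k hk
    rw [Finset.mem_erase, Finset.mem_range] at hk
    exact sub_ne_zero_of_ne (bcoord_ne hanti (Ne.symm hk.1) hi (by omega))
  -- F' = (A i + 1) * F
  have hFF : F' = (A i + 1) * F := by
    rw [hF, hF', ← Finset.mul_prod_erase _ _ hmemi, ← Finset.mul_prod_erase _ _ hmemi]
    have h1 : (Nat.factorial (bcoord l lam' i) : ℚ)
        = (A i + 1) * (Nat.factorial (bcoord l lam i) : ℚ) := by
      rw [hA' i, if_pos rfl, Nat.factorial_succ]
      push_cast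
      simp [hA]
    rw [h1]
    have h2 : ∀ m ∈ (Finset.range (l+1)).erase i,
        (Nat.factorial (bcoord l lam' m) : ℚ) = (Nat.factorial (bcoord l lam m) : ℚ) := by
      intro m hm
      rw [hA' m, if_neg (Finset.mem_erase.mp hm).1]
    rw [Finset.prod_congr rfl h2]
    ring
  -- key: D' * E = D * E'
  have hsplit : (Finset.range (l+1)).erase i = Finset.range i ∪ Finset.Icc (i+1) l := by
    ext x
    simp only [Finset.mem_erase, Finset.mem_range, Finset.mem_union, Finset.mem_Icc]
    omega
  have hdisj2 : Disjoint (Finset.range i) (Finset.Icc (i+1) l) := by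
    rw [Finset.disjoint_left]
    intro x hx hx'
    rw [Finset.mem_range] at hx
    rw [Finset.mem_Icc] at hx'
    omega
  -- rows
  set Row : ℕ → ℚ := fun m => ∏ k ∈ Finset.Icc (m+1) l, (A m - A k) with hRow
  set Row' : ℕ → ℚ := fun m => ∏ k ∈ Finset.Icc (m+1) l,
      ((bcoord l lam' m : ℚ) - (bcoord l lam' k : ℚ)) with hRow'
  have hRowEq : ∀ m ∈ Finset.Icc (i+1) l, Row' m = Row m := by
    intro m hm
    rw [Finset.mem_Icc] at hm
    refine Finset.prod_congr rfl fun k hk => ?_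
    rw [Finset.mem_Icc] at hk
    rw [hA'c, hA'c, if_neg (by omega), if_neg (by omega)]
  have hRowI : Row' i = ∏ k ∈ Finset.Icc (i+1) l, (A i + 1 - A k) := by
    refine Finset.prod_congr rfl fun k hk => ?_
    rw [Finset.mem_Icc] at hk
    rw [hA'c, hA'c, if_pos rfl, if_neg (by omega)]
  have hRowLt : ∀ m ∈ Finset.range i, Row' m * (A i - A m) = Row m * (A i + 1 - A m) := by
    intro m hm
    rw [Finset.mem_range] at hm
    have hmem : i ∈ Finset.Icc (m+1) l := Finset.mem_Icc.mpr ⟨by omega, hi⟩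
    rw [hRow, hRow']
    simp only
    rw [← Finset.mul_prod_erase _ _ hmem, ← Finset.mul_prod_erase _ _ hmem]
    have h3 : ∀ k ∈ (Finset.Icc (m+1) l).erase i,
        ((bcoord l lam' m : ℚ) - (bcoord l lam' k : ℚ)) = A m - A k := by
      intro k hk
      rw [hA'c, hA'c, if_neg (Finset.mem_erase.mp hk).1, if_neg (by omega)]
    rw [Finset.prod_congr rfl h3, hA'c, hA'c, if_pos rfl, if_neg (by omega)]
    ring
  have hDrow : D = (∏ m ∈ Finset.range i, Row m) * Row i * ∏ m ∈ Finset.Icc (i+1) l, Row m := by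
    rw [hD, ← Finset.mul_prod_erase _ _ hmemi, hsplit, Finset.prod_union hdisj2]
    ring
  have hD'row : D' = (∏ m ∈ Finset.range i, Row' m) * Row' i *
      ∏ m ∈ Finset.Icc (i+1) l, Row' m := by
    rw [hD', ← Finset.mul_prod_erase _ _ hmemi, hsplit, Finset.prod_union hdisj2]
    ring
  have hEeq : E = (∏ k ∈ Finset.range i, (A i - A k)) * Row i := by
    rw [hE, hsplit, Finset.prod_union hdisj2, hRow]
  have hE'eq : E' = (∏ k ∈ Finset.range i, (A i + 1 - A k)) * Row' i := by
    rw [hE', hsplit, Finset.prod_union hdisj2, hRowI]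
  have hcomb : (∏ m ∈ Finset.range i, Row' m) * (∏ k ∈ Finset.range i, (A i - A k))
      = (∏ m ∈ Finset.range i, Row m) * (∏ k ∈ Finset.range i, (A i + 1 - A k)) := by
    rw [← Finset.prod_mul_distrib, ← Finset.prod_mul_distrib]
    exact Finset.prod_congr rfl hRowLt
  have hDD : D' * E = D * E' := by
    rw [hDrow, hD'row, hEeq, hE'eq, Finset.prod_congr rfl hRowEq]
    linear_combination (Row i * Row' i * (∏ m ∈ Finset.Icc (i+1) l, Row m)) * hcomb
  -- conclude
  have hH : hookProd (l+1) lam = F / D := by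
    field_simp
    linarith [hHD]
  have hH' : hookProd (l+1) lam' = F' / D' := by
    field_simp
    linarith [hHD']
  rw [hH, hH', transT, hFF]
  rw [show (∏ k ∈ (Finset.range (l+1)).erase i,
      ((bcoord l lam i : ℚ) + 1 - (bcoord l lam k : ℚ))) = E' from rfl]
  rw [show (∏ k ∈ (Finset.range (l+1)).erase i,
      ((bcoord l lam i : ℚ) - (bcoord l lam k : ℚ))) = E from rfl]
  have hAi1 : A i + 1 ≠ 0 := by
    have : (0:ℚ) ≤ A i := by rw [hA]; positivity
    linarith
  field_simp
  linear_combination ((bcoord l lam i : ℚ) + 1) * hDD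

end Main

section Glue
open Polynomial
variable {l : ℕ} {lam : ℕ → ℕ}

lemma transProb_eq (hanti : Antitone lam) {i : ℕ} (hi : i ≤ l) :
    transProb (l+1) lam i = transT l lam i := by
  classical
  rw [transProb]
  split_ifs with hv
  · exact ratio_eq hanti hi hv
  · have hcon : ¬(i = 0 ∨ lam i < lam (i-1)) := fun h => hv (update_antitone hanti h)
    push_neg at hcon
    obtain ⟨hi0, hle⟩ := hcon
    have heq : lam (i-1) = lam i := le_antisymm hle (hanti (by omega))
    have hb : bcoord l lam (i-1) = bcoord l lam i + 1 := by
      unfold bcoord; omega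
    symm
    rw [transT]
    have hmem : i - 1 ∈ (Finset.range (l+1)).erase i := by
      rw [Finset.mem_erase, Finset.mem_range]; omega
    rw [Finset.prod_eq_zero hmem (by rw [hb]; push_cast; ring), zero_mul]

variable {F : Type*} [Field F] {ι : Type*} [DecidableEq ι]

theorem leadingCoeff_lagrange_basis {s : Finset ι} {v : ι → F} (hvs : Set.InjOn v s)
    {i : ι} (hi : i ∈ s) :
    (Lagrange.basis s v i).leadingCoeff = Lagrange.nodalWeight s v i := by
  rw [Lagrange.basis, Polynomial.leadingCoeff_prod, Lagrange.nodalWeight]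
  refine Finset.prod_congr rfl fun j hj => ?_
  have hne : v i ≠ v j := by
    rcases Finset.mem_erase.mp hj with ⟨hij, hj⟩
    exact mt (hvs hi hj) (Ne.symm hij)
  rw [Lagrange.basisDivisor, leadingCoeff_mul, leadingCoeff_C,
    (monic_X_sub_C (v j)).leadingCoeff, mul_one]

theorem sum_eval_mul_nodalWeight {s : Finset ι} {v : ι → F} (hvs : Set.InjOn v s)
    (P : F[X]) (hP : P.Monic) (hdeg : P.natDegree + 1 = s.card) :
    ∑ i ∈ s, P.eval (v i) * Lagrange.nodalWeight s v i = 1 := by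
  have hcard : s.card ≠ 0 := by omega
  have hPi : P = Lagrange.interpolate s v fun i => P.eval (v i) := by
    refine Lagrange.eq_interpolate hvs ?_
    rw [Polynomial.degree_eq_natDegree hP.ne_zero]
    exact_mod_cast Nat.lt_of_lt_of_le (Nat.lt_succ_self _) (le_of_eq hdeg)
  have hco := congrArg (fun q => Polynomial.coeff q P.natDegree) hPi
  simp only [Lagrange.interpolate_apply, Polynomial.finset_sum_coeff,
    Polynomial.coeff_C_mul] at hco
  rw [← hP.coeff_natDegree, hco]
  refine Finset.sum_congr rfl fun i hi => ?_
  congr 1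
  have hdb : (Lagrange.basis s v i).natDegree = P.natDegree := by
    rw [Lagrange.natDegree_basis hvs hi]; omega
  rw [← hdb, Polynomial.coeff_natDegree, leadingCoeff_lagrange_basis hvs hi]

lemma transT_sum (hanti : Antitone lam) (hsupp : ∀ i, l ≤ i → lam i = 0) :
    ∑ i ∈ Finset.range (l+1), transT l lam i = 1 := by
  classical
  set w : ℕ → ℚ := fun k => if k ≤ l then (bcoord l lam k : ℚ) else (-1) with hw
  have hwk : ∀ k, k ≤ l → w k = (bcoord l lam k : ℚ) := fun k hk => if_pos hk
  have hwl : w (l+1) = -1 := if_neg (by omega)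
  have hinj : Set.InjOn w (Finset.range (l+2)) := by
    intro a ha b hb hab
    simp only [Finset.coe_range, Set.mem_Iio] at ha hb
    by_cases h1 : a ≤ l <;> by_cases h2 : b ≤ l
    · by_contra hne
      rw [hwk a h1, hwk b h2] at hab
      exact absurd hab (bcoord_ne hanti hne h1 h2)
    · rw [hwk a h1, hw] at hab
      simp only [if_neg h2] at hab
      have : (0:ℚ) ≤ (bcoord l lam a : ℚ) := Nat.cast_nonneg _
      linarith [hab ▸ this]
    · rw [hwk b h2, hw] at hab
      simp only [if_neg h1] at hab
      have : (0:ℚ) ≤ (bcoord l lam b : ℚ) := Nat.cast_nonneg _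
      linarith [hab ▸ this]
    · omega
  set P : Polynomial ℚ := ∏ k ∈ Finset.range (l+1), (Polynomial.X - Polynomial.C (w k - 1))
    with hP
  have hmon : P.Monic := Polynomial.monic_prod_of_monic _ _ fun k _ => Polynomial.monic_X_sub_C _
  have hdeg : P.natDegree + 1 = (Finset.range (l+2)).card := by
    rw [hP, Polynomial.natDegree_prod_of_monic _ _ (fun k _ => Polynomial.monic_X_sub_C _)]
    simp only [Polynomial.natDegree_X_sub_C, Finset.sum_const, smul_eq_mul, mul_one,
      Finset.card_range]
  have hsum := sum_eval_mul_nodalWeight hinj P hmon hdeg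
  rw [Finset.sum_range_succ] at hsum
  have hlast : Polynomial.eval (w (l+1)) P = 0 := by
    rw [hP, Polynomial.eval_prod]
    refine Finset.prod_eq_zero (Finset.mem_range.mpr (show l < l+1 by omega)) ?_
    have hAl : bcoord l lam l = 0 := by
      unfold bcoord; rw [hsupp l le_rfl]; omega
    rw [Polynomial.eval_sub, Polynomial.eval_X, Polynomial.eval_C, hwl, hwk l le_rfl, hAl]
    norm_num
  rw [hlast, zero_mul, add_zero] at hsum
  rw [← hsum]
  refine Finset.sum_congr rfl fun i hi => ?_
  rw [Finset.mem_range] at hi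
  have hil : i ≤ l := by omega
  have heval : Polynomial.eval (w i) P
      = ∏ k ∈ (Finset.range (l+1)).erase i, ((bcoord l lam i : ℚ) + 1 - bcoord l lam k) := by
    rw [hP, Polynomial.eval_prod, ← Finset.mul_prod_erase _ _ (Finset.mem_range.mpr hi)]
    have h1 : Polynomial.eval (w i) (Polynomial.X - Polynomial.C (w i - 1)) = 1 := by
      simp
    rw [h1, one_mul]
    refine Finset.prod_congr rfl fun k hk => ?_
    have hk' : k ≤ l := by
      have := Finset.mem_range.mp (Finset.mem_of_mem_erase hk); omega
    rw [Polynomial.eval_sub, Polynomial.eval_X, Polynomial.eval_C, hwk i hil, hwk k hk']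
    ring
  have herase : (Finset.range (l+2)).erase i
      = insert (l+1) ((Finset.range (l+1)).erase i) := by
    ext x
    simp only [Finset.mem_erase, Finset.mem_range, Finset.mem_insert]
    omega
  have hnotmem : l + 1 ∉ (Finset.range (l+1)).erase i := by
    simp
  have hnw : Lagrange.nodalWeight (Finset.range (l+2)) w i
      = ((bcoord l lam i : ℚ) + 1)⁻¹ *
        ∏ k ∈ (Finset.range (l+1)).erase i, ((bcoord l lam i : ℚ) - bcoord l lam k)⁻¹ := by
    rw [Lagrange.nodalWeight, herase, Finset.prod_insert hnotmem]
    congr 1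
    · rw [hwk i hil, hwl, sub_neg_eq_add]
    · refine Finset.prod_congr rfl fun k hk => ?_
      have hk' : k ≤ l := by
        have := Finset.mem_range.mp (Finset.mem_of_mem_erase hk); omega
      rw [hwk i hil, hwk k hk']
  rw [heval, hnw, transT, mul_inv, ← Finset.prod_inv_distrib]

end Glue


/-- The transition measure `ω_λ` is a probability measure:
`∑_{i=1}^{ℓ(λ)+1} cᵢ(λ) = 1`. -/
theorem transProb_sum_eq_one (l : ℕ) (lam : ℕ → ℕ)
    (hanti : Antitone lam) (hsupp : ∀ i, l ≤ i → lam i = 0) :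
    ∑ i ∈ Finset.range (l + 1), transProb (l + 1) lam i = 1 := by
  have h1 : ∀ i ∈ Finset.range (l+1), transProb (l+1) lam i = transT l lam i :=
    fun i hi => transProb_eq hanti (by have := Finset.mem_range.mp hi; omega)
  rw [Finset.sum_congr rfl h1]
  exact transT_sum hanti hsupp
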